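/- For every n ≥ 1 the matrix Δ_n is invertible, and the matrix (conj(Δ_n))^{-1} Δ_n (equivalently Δ_n^{-*} Δ_n, since Δ_n is symmetric) is similar to the Jordan block J_n(1). -/

import Mathlib

open Matrix

/-- The `n×n` upper-triangular Jordan block with eigenvalue `l`. -/
noncomputable def Jmat (n : ℕ) (l : ℂ) : Matrix (Fin n) (Fin n) ℂ :=
  Matrix.of fun i j =>
    if (i : ℕ) = (j : ℕ) then l
    else if (j : ℕ) = (i : ℕ) + 1 then 1 else 0

/-- The symmetric matrix `Δ_n`: (1-based) entry `(j,k)` is `1` if `j+k = n+1`,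
`i` if `j+k = n+2`, and `0` otherwise. -/
noncomputable def Dmat (n : ℕ) : Matrix (Fin n) (Fin n) ℂ :=
  Matrix.of fun i j =>
    if (i : ℕ) + (j : ℕ) + 1 = n then 1
    else if (i : ℕ) + (j : ℕ) = n then Complex.I
    else 0

/-- The `2m×2m` block matrix `H_m(l) = [[0, I],[J_m(l), 0]]`. -/
noncomputable def Hmat (m : ℕ) (l : ℂ) : Matrix (Fin m ⊕ Fin m) (Fin m ⊕ Fin m) ℂ :=
  Matrix.fromBlocks 0 1 (Jmat m l) 0

/-- `T(A) = {CᴴA + AC}`, the tangent space to the *congruence class of `A`. -/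
def Tset {n : Type*} [Fintype n] (A : Matrix n n ℂ) : Set (Matrix n n ℂ) :=
  {X | ∃ C : Matrix n n ℂ, X = Cᴴ * A + A * C}

/-- `T(M,N) = {(SᴴM + NR, RᴴN + MS)}`. -/
def Tpair {p q : Type*} [Fintype p] [Fintype q]
    (M : Matrix p p ℂ) (N : Matrix q q ℂ) :
    Set (Matrix q p ℂ × Matrix p q ℂ) :=
  {X | ∃ (S : Matrix p q ℂ) (R : Matrix q p ℂ),
      X = (Sᴴ * M + N * R, Rᴴ * N + M * S)}

/-! ### Auxiliary material -/

lemma negI_ne : (-Complex.I) ≠ 0 := by simp [Complex.I_ne_zero]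

lemma Dsplit (n : ℕ) (r s : Fin n) :
    Dmat n r s = (if (r:ℕ)+(s:ℕ)+1 = n then 1 else 0)
      + (if (r:ℕ)+(s:ℕ) = n then Complex.I else 0) := by
  simp only [Dmat, Matrix.of_apply]
  split_ifs <;> simp_all

lemma Dsplit' (n : ℕ) (r s : Fin n) :
    ((Dmat n).map (starRingEnd ℂ)) r s = (if (r:ℕ)+(s:ℕ)+1 = n then 1 else 0)
      + (if (r:ℕ)+(s:ℕ) = n then -Complex.I else 0) := by
  simp only [Dmat, Matrix.map_apply, Matrix.of_apply]
  split_ifs <;> simp_all [Complex.conj_I]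

lemma sumGen (n : ℕ) (c : ℂ) (r : Fin n) (f : Fin n → ℂ) :
    ∑ s : Fin n, ((if (r:ℕ)+(s:ℕ)+1 = n then 1 else 0)
      + (if (r:ℕ)+(s:ℕ) = n then c else 0)) * f s
      = f ⟨n-1-r, by omega⟩ + (if h : 1 ≤ (r:ℕ) then c * f ⟨n-r, by omega⟩ else 0) := by
  have hr := r.isLt
  simp only [add_mul, Finset.sum_add_distrib]
  congr 1
  · rw [Finset.sum_eq_single (⟨n-1-r, by omega⟩ : Fin n)]
    · simp only [Fin.val_mk]
      rw [if_pos (by omega), one_mul]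
    · intro b _ hb
      have : ¬ ((r:ℕ)+(b:ℕ)+1 = n) := by
        intro h; apply hb; apply Fin.ext; simp; omega
      simp [this]
    · simp
  · by_cases h : 1 ≤ (r:ℕ)
    · rw [dif_pos h, Finset.sum_eq_single (⟨n-r, by omega⟩ : Fin n)]
      · simp only [Fin.val_mk]
        rw [if_pos (by omega)]
      · intro b _ hb
        have : ¬ ((r:ℕ)+(b:ℕ) = n) := by
          intro hh; apply hb; apply Fin.ext; simp; omega
        simp [this]
      · simp
    · rw [dif_neg h]
      apply Finset.sum_eq_zero
      intro b _
      have : ¬ ((r:ℕ)+(b:ℕ) = n) := by have := b.isLt; omega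
      simp [this]

lemma Jsplit (n : ℕ) (s k : Fin n) :
    Jmat n 1 s k = (if (s:ℕ) = (k:ℕ) then 1 else 0)
      + (if (k:ℕ) = (s:ℕ)+1 then 1 else 0) := by
  simp only [Jmat, Matrix.of_apply]
  split_ifs <;> simp_all

lemma sumJ (n : ℕ) (k : Fin n) (f : Fin n → ℂ) :
    ∑ s : Fin n, f s * Jmat n 1 s k
      = f k + (if h : 1 ≤ (k:ℕ) then f ⟨(k:ℕ)-1, by omega⟩ else 0) := by
  have hk := k.isLt
  simp only [Jsplit, mul_add, Finset.sum_add_distrib]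
  congr 1
  · rw [Finset.sum_eq_single k]
    · simp
    · intro b _ hb
      have : ¬ ((b:ℕ) = (k:ℕ)) := fun h => hb (Fin.ext h)
      simp [this]
    · simp
  · by_cases h : 1 ≤ (k:ℕ)
    · rw [dif_pos h, Finset.sum_eq_single (⟨(k:ℕ)-1, by omega⟩ : Fin n)]
      · simp only [Fin.val_mk]
        rw [if_pos (by omega), mul_one]
      · intro b _ hb
        have : ¬ ((k:ℕ) = (b:ℕ)+1) := by
          intro hh; apply hb; apply Fin.ext; simp; omega
        simp [this]
      · simp
    · rw [dif_neg h]
      apply Finset.sum_eq_zero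
      intro b _
      have : ¬ ((k:ℕ) = (b:ℕ)+1) := by omega
      simp [this]

/-- entries of the explicit similarity matrix `P`. -/
noncomputable def pent (n x y : ℕ) : ℂ :=
  (2*Complex.I)^(n-1-y) * (-Complex.I)^((y:ℤ)-(x:ℤ)) * (y.choose x : ℂ)

lemma pent_zero (n x : ℕ) (hx : 1 ≤ x) : pent n x 0 = 0 := by
  simp [pent, Nat.choose_eq_zero_of_lt hx]

lemma pent_last (n y : ℕ) (hy : y < n - 1) : pent n (n-1) y = 0 := by
  simp [pent, Nat.choose_eq_zero_of_lt hy]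

lemma keyB (n a m : ℕ) (hm : m + 1 ≤ n - 1) :
    2*Complex.I * pent n (a+1) (m+1) + Complex.I * pent n (a+1) m = pent n a m := by
  have h1 : n - 1 - m = (n - 1 - (m+1)) + 1 := by omega
  have h2 : ((m:ℤ)+1) - ((a:ℤ)+1) = (m:ℤ) - a := by ring
  have hz : (-Complex.I)^((m:ℤ)-((a:ℤ)+1)) = (-Complex.I)^((m:ℤ)-(a:ℤ)) * Complex.I := by
    rw [show (m:ℤ)-((a:ℤ)+1) = ((m:ℤ)-(a:ℤ)) - 1 by ring, zpow_sub_one₀ negI_ne]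
    congr 1
    rw [inv_neg, Complex.inv_I, neg_neg]
  have hP : ((m+1).choose (a+1) : ℂ) = (m.choose a : ℂ) + (m.choose (a+1) : ℂ) := by
    rw [Nat.choose_succ_succ]; push_cast; ring
  simp only [pent, h1, pow_succ]
  push_cast
  rw [h2, hz, hP]
  set w := (2*Complex.I)^(n-1-(m+1))
  set z := (-Complex.I)^((m:ℤ)-(a:ℤ))
  linear_combination (2*Complex.I*w*z*(m.choose (a+1) : ℂ)) * Complex.I_sq

noncomputable def Emat (n : ℕ) : Matrix (Fin n) (Fin n) ℂ :=
  Matrix.of fun r k =>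
    if (r:ℕ) + (k:ℕ) + 1 ≤ n then (-Complex.I)^((n:ℤ)-1-(k:ℤ)-(r:ℤ)) else 0

lemma DE (n : ℕ) : Dmat n * Emat n = 1 := by
  ext r k
  have hr := r.isLt
  have hk := k.isLt
  rw [Matrix.mul_apply]
  simp only [Dsplit]
  rw [sumGen n Complex.I r (fun s => Emat n s k)]
  simp only [Emat, Matrix.of_apply, Matrix.one_apply, Fin.val_mk]
  by_cases h1 : 1 ≤ (r:ℕ)
  · rw [dif_pos h1]
    push_cast [show ((n - 1 - (r:ℕ) : ℕ) : ℤ) = (n:ℤ) - 1 - (r:ℤ) by omega,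
      show ((n - (r:ℕ) : ℕ) : ℤ) = (n:ℤ) - (r:ℤ) by omega]
    by_cases hkr : (k:ℕ) < (r:ℕ)
    · rw [if_pos (by omega), if_pos (by omega), if_neg (by exact Fin.ne_of_val_ne (by omega))]
      have e1 : (n:ℤ)-1-(k:ℤ)-((n:ℤ)-1-(r:ℤ)) = (r:ℤ)-(k:ℤ) := by ring
      have e2 : (n:ℤ)-1-(k:ℤ)-((n:ℤ)-(r:ℤ)) = ((r:ℤ)-(k:ℤ)) - 1 := by ring
      rw [e1, e2, zpow_sub_one₀ negI_ne, inv_neg, Complex.inv_I, neg_neg]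
      set z := (-Complex.I)^((r:ℤ)-(k:ℤ))
      linear_combination z * Complex.I_sq
    · by_cases hke : (k:ℕ) = (r:ℕ)
      · rw [if_pos (by omega), if_neg (by omega), if_pos (show r = k from Fin.ext (by omega))]
        rw [show (n:ℤ)-1-(k:ℤ)-((n:ℤ)-1-(r:ℤ)) = 0 by omega]
        simp
      · rw [if_neg (by omega), if_neg (by omega),
          if_neg (by exact Fin.ne_of_val_ne (by omega))]
        simp
  · rw [dif_neg h1]
    push_cast [show ((n - 1 - (r:ℕ) : ℕ) : ℤ) = (n:ℤ) - 1 - (r:ℤ) by omega]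
    by_cases hke : (k:ℕ) = 0
    · rw [if_pos (by omega), if_pos (by exact Fin.ext (by omega))]
      rw [show (n:ℤ)-1-(k:ℤ)-((n:ℤ)-1-(r:ℤ)) = 0 by omega]
      simp
    · rw [if_neg (by omega), if_neg (by exact Fin.ne_of_val_ne (by omega))]
      simp

noncomputable def Pmat (n : ℕ) : Matrix (Fin n) (Fin n) ℂ :=
  Matrix.of fun r k => pent n (r:ℕ) (k:ℕ)

lemma Pmat_isUnit (n : ℕ) : IsUnit (Pmat n) := by
  rw [Matrix.isUnit_iff_isUnit_det, isUnit_iff_ne_zero]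
  have hdet : (Pmat n).det = ∏ i : Fin n, Pmat n i i := by
    apply Matrix.det_of_upperTriangular
    intro i j hij
    have h0 : ((j:ℕ)).choose (i:ℕ) = 0 := Nat.choose_eq_zero_of_lt hij
    simp [Pmat, pent, h0]
  rw [hdet]
  rw [Finset.prod_ne_zero_iff]
  intro i _
  simp only [Pmat, Matrix.of_apply, pent, sub_self, zpow_zero, Nat.choose_self]
  push_cast
  simp only [mul_one]
  exact pow_ne_zero _ (by simp [Complex.I_ne_zero])

lemma PJ (n : ℕ) (x k : Fin n) :
    (Pmat n * Jmat n 1) x k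
      = pent n x k + (if 1 ≤ (k:ℕ) then pent n x ((k:ℕ)-1) else 0) := by
  rw [Matrix.mul_apply, sumJ n k (fun s => Pmat n x s)]
  simp only [Pmat, Matrix.of_apply, Fin.val_mk]
  split_ifs <;> rfl

lemma key2 (n : ℕ) (hn : 1 ≤ n) :
    Dmat n * Pmat n = ((Dmat n).map (starRingEnd ℂ)) * (Pmat n * Jmat n 1) := by
  ext r k
  have hr := r.isLt
  have hk := k.isLt
  rw [Matrix.mul_apply, Matrix.mul_apply]
  simp only [Dsplit, Dsplit']
  rw [sumGen n Complex.I r (fun s => Pmat n s k),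
    sumGen n (-Complex.I) r (fun s => (Pmat n * Jmat n 1) s k)]
  simp only [PJ]
  simp only [Pmat, Matrix.of_apply, Fin.val_mk]
  by_cases h1 : 1 ≤ (r:ℕ)
  · rw [dif_pos h1, dif_pos h1]
    by_cases h2 : 1 ≤ (k:ℕ)
    · rw [if_pos h2, if_pos h2]
      have hkey := keyB n (n-1-(r:ℕ)) ((k:ℕ)-1) (by omega)
      rw [show (n-1-(r:ℕ))+1 = n-(r:ℕ) by omega, show (k:ℕ)-1+1 = (k:ℕ) by omega] at hkey
      linear_combination hkey
    · rw [if_neg h2, if_neg h2]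
      have hk0 : (k:ℕ) = 0 := by omega
      rw [hk0, pent_zero n (n-(r:ℕ)) (by omega)]
      ring
  · rw [dif_neg h1, dif_neg h1]
    have hr0 : (r:ℕ) = 0 := by omega
    by_cases h2 : 1 ≤ (k:ℕ)
    · rw [if_pos h2, hr0, Nat.sub_zero]
      rw [pent_last n ((k:ℕ)-1) (by omega)]
      ring
    · rw [if_neg h2]
      ring

/-- For `n ≥ 1`, `Δ_n` is invertible and `(conj Δ_n)⁻¹ Δ_n` is similar to `J_n(1)`. -/
theorem stmt1 (n : ℕ) (hn : 1 ≤ n) :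
    IsUnit (Dmat n) ∧
    ∃ P : Matrix (Fin n) (Fin n) ℂ, IsUnit P ∧
      P⁻¹ * (((Dmat n).map (starRingEnd ℂ))⁻¹ * Dmat n) * P = Jmat n 1 := by
  have hDE := DE n
  have hD : IsUnit (Dmat n) := (Matrix.isUnit_iff_isUnit_det _).mpr (Matrix.isUnit_det_of_right_inverse hDE)
  refine ⟨hD, Pmat n, Pmat_isUnit n, ?_⟩
  set D' := (Dmat n).map (starRingEnd ℂ) with hD'def
  have hD'E : D' * (Emat n).map (starRingEnd ℂ) = 1 := by
    rw [hD'def, ← Matrix.map_mul, hDE, Matrix.map_one] <;> simp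
  have hD' : IsUnit D' := (Matrix.isUnit_iff_isUnit_det _).mpr (Matrix.isUnit_det_of_right_inverse hD'E)
  have hP := Pmat_isUnit n
  have h1 : D'⁻¹ * Dmat n * Pmat n = Pmat n * Jmat n 1 := by
    rw [mul_assoc, key2 n hn, ← mul_assoc,
      Matrix.nonsing_inv_mul D' ((Matrix.isUnit_iff_isUnit_det D').mp hD'), one_mul]
  calc (Pmat n)⁻¹ * (D'⁻¹ * Dmat n) * Pmat n
      = (Pmat n)⁻¹ * (D'⁻¹ * Dmat n * Pmat n) := by rw [mul_assoc]
    _ = (Pmat n)⁻¹ * (Pmat n * Jmat n 1) := by rw [h1]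
    _ = Jmat n 1 := by
        rw [← mul_assoc,
          Matrix.nonsing_inv_mul (Pmat n) ((Matrix.isUnit_iff_isUnit_det _).mp hP), one_mul]
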